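/- Let m and n be integers with n ≥ 2 and m > 2n. Then: (i) for every finite simple graph W with at least one vertex, t(C_{2n}, W) ≥ t(C_m, W)^{2n/m}; and (ii) for every real c < 2n/m there exists a finite simple graph W with t(C_m, W) > 0 and t(C_{2n}, W) < t(C_m, W)^c. (That is, ρ(C_m, C_{2n}) = 2n/m for m > 2n.) -/

import Mathlib

open Matrix Finset BigOperators

variable {β : Type} [Fintype β] [DecidableEq β]

noncomputable def cycSum (A : Matrix β β ℝ) (k : ℕ) : ℝ :=
  ∑ f : Fin (k + 1) → β, ∏ i : Fin (k + 1), A (f i) (f (i + 1))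

lemma shift_lemma {k : ℕ} (u w v : β) (g : Fin k → β) :
    (Fin.cons u (Fin.snoc (Fin.cons w g) v) : Fin (k + 3) → β) ∘ Fin.succ
      = (Fin.cons w (Fin.snoc g v) : Fin (k + 2) → β) := by
  funext j
  simp only [Function.comp_apply, Fin.cons_succ]
  refine Fin.lastCases ?_ (fun j' => ?_) j
  · rw [Fin.snoc_last]
    rw [show (Fin.last (k + 1) : Fin (k + 2)) = Fin.succ (Fin.last k) from rfl,
      Fin.cons_succ, Fin.snoc_last]
  · rw [Fin.snoc_castSucc]
    refine Fin.cases ?_ (fun j'' => ?_) j'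
    · rw [Fin.cons_zero, show (Fin.castSucc (0 : Fin (k+1))) = 0 from rfl, Fin.cons_zero]
    · rw [Fin.cons_succ, ← Fin.succ_castSucc, Fin.cons_succ, Fin.snoc_castSucc]

lemma pow_apply_eq (A : Matrix β β ℝ) : ∀ (k : ℕ) (u v : β),
    (A ^ (k + 1)) u v =
      ∑ g : Fin k → β, ∏ i : Fin (k + 1),
        A ((Fin.cons u (Fin.snoc g v) : Fin (k + 2) → β) i.castSucc)
          ((Fin.cons u (Fin.snoc g v) : Fin (k + 2) → β) i.succ) := by
  intro k
  induction k with
  | zero =>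
    intro u v
    rw [pow_one]
    rw [Fintype.sum_unique, Fin.prod_univ_one]
    rw [show (Fin.castSucc (0 : Fin 1)) = 0 from rfl, Fin.cons_zero]
    rw [Fin.cons_succ, show ((0 : Fin 1)) = Fin.last 0 from rfl, Fin.snoc_last]
  | succ k ih =>
    intro u v
    rw [pow_succ', mul_apply]
    rw [← Equiv.sum_comp (Fin.consEquiv (fun _ : Fin (k+1) => β))]
    rw [Fintype.sum_prod_type]
    refine Finset.sum_congr rfl (fun w _ => ?_)
    rw [ih w v, Finset.mul_sum]
    refine Finset.sum_congr rfl (fun g _ => ?_)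
    have hcons : (Fin.consEquiv (fun _ : Fin (k+1) => β)) (w, g) = Fin.cons w g := rfl
    rw [hcons]
    conv_rhs => rw [Fin.prod_univ_succ]
    have hs := shift_lemma (k := k) u w v g
    congr 1
    · refine Finset.prod_congr rfl (fun i _ => ?_)
      have h1 := congrFun hs i.castSucc
      have h2 := congrFun hs i.succ
      simp only [Function.comp_apply] at h1 h2
      rw [← Fin.succ_castSucc, h1, h2]

lemma trace_pow_eq_cycSum (A : Matrix β β ℝ) (k : ℕ) :
    Matrix.trace (A ^ (k + 1)) = cycSum A k := by
  rw [Matrix.trace, cycSum, ← Equiv.sum_comp (Fin.consEquiv (fun _ : Fin (k+1) => β)),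
    Fintype.sum_prod_type]
  refine Finset.sum_congr rfl (fun u _ => ?_)
  rw [Matrix.diag_apply, pow_apply_eq]
  refine Finset.sum_congr rfl (fun g _ => ?_)
  have hcons : (Fin.consEquiv (fun _ : Fin (k+1) => β)) (u, g) = Fin.cons u g := rfl
  rw [hcons]
  refine Finset.prod_congr rfl (fun i _ => ?_)
  have key1 : (Fin.cons u (Fin.snoc g u) : Fin (k + 2) → β) i.castSucc
      = (Fin.cons u g : Fin (k + 1) → β) i := by
    refine Fin.cases ?_ (fun j => ?_) i
    · rw [show (Fin.castSucc (0 : Fin (k+1))) = 0 from rfl, Fin.cons_zero, Fin.cons_zero]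
    · rw [← Fin.succ_castSucc, Fin.cons_succ, Fin.snoc_castSucc, Fin.cons_succ]
  have key2 : (Fin.cons u (Fin.snoc g u) : Fin (k + 2) → β) i.succ
      = (Fin.cons u g : Fin (k + 1) → β) (i + 1) := by
    rw [Fin.cons_succ]
    refine Fin.lastCases ?_ (fun j => ?_) i
    · rw [Fin.snoc_last, Fin.last_add_one, Fin.cons_zero]
    · rw [Fin.snoc_castSucc, Fin.coeSucc_eq_succ, Fin.cons_succ]
  rw [key1, key2]

open SimpleGraph in
def homEquivSubtype (k : ℕ) (W : SimpleGraph β) :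
    (cycleGraph (k + 2) →g W) ≃ {f : Fin (k + 2) → β // ∀ i, W.Adj (f i) (f (i + 1))} where
  toFun φ := ⟨φ, fun i => φ.map_rel (by
    rw [cycleGraph_adj]
    exact Or.inr (add_sub_cancel_left i 1))⟩
  invFun p := ⟨p.1, by
    intro u v huv
    rw [cycleGraph_adj] at huv
    rcases huv with h | h
    · have : u = v + 1 := by rw [← h]; exact (add_sub_cancel _ _).symm
      subst this
      exact (p.2 v).symm
    · have : v = u + 1 := by rw [← h]; exact (add_sub_cancel _ _).symm
      subst this
      exact p.2 u⟩
  left_inv φ := rfl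
  right_inv p := rfl

open SimpleGraph in
lemma hom_card (k : ℕ) (W : SimpleGraph β) [DecidableRel W.Adj] :
    (Nat.card (cycleGraph (k + 2) →g W) : ℝ) = cycSum (W.adjMatrix ℝ) (k + 1) := by
  rw [Nat.card_congr (homEquivSubtype k W), Nat.card_eq_fintype_card, Fintype.card_subtype,
    cycSum]
  rw [Finset.card_filter, Nat.cast_sum]
  refine Finset.sum_congr rfl (fun f _ => ?_)
  rw [Finset.prod_congr rfl (fun i (_ : i ∈ Finset.univ) => adjMatrix_apply W (f i) (f (i+1)))]
  rw [Finset.prod_boole]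
  simp

lemma sum_rpow_le_rpow_sum' {s : Finset β} {f : β → ℝ} (hf : ∀ i ∈ s, 0 ≤ f i) {p : ℝ}
    (hp : 1 ≤ p) : ∑ i ∈ s, f i ^ p ≤ (∑ i ∈ s, f i) ^ p := by
  set S := ∑ i ∈ s, f i with hS
  have hS0 : 0 ≤ S := Finset.sum_nonneg hf
  rcases eq_or_lt_of_le hS0 with h0 | hpos
  · have hall : ∀ i ∈ s, f i = 0 := by
      intro i hi
      exact le_antisymm (by
        have := Finset.single_le_sum hf hi
        linarith) (hf i hi)
    rw [← h0]
    rw [Real.zero_rpow (by linarith)]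
    rw [Finset.sum_congr rfl (fun i hi => by rw [hall i hi, Real.zero_rpow (by linarith)])]
    simp
  · have key : ∀ i ∈ s, f i ^ p ≤ S ^ (p - 1) * f i := by
      intro i hi
      have h1 : f i ^ p = f i ^ (p - 1) * f i := by
        nth_rewrite 3 [← Real.rpow_one (f i)]
        rw [← Real.rpow_add' (hf i hi) (by norm_num; linarith)]
        norm_num
      rw [h1]
      refine mul_le_mul_of_nonneg_right ?_ (hf i hi)
      exact Real.rpow_le_rpow (hf i hi) (Finset.single_le_sum hf hi) (by linarith)
    calc ∑ i ∈ s, f i ^ p ≤ ∑ i ∈ s, S ^ (p - 1) * f i := Finset.sum_le_sum key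
    _ = S ^ (p - 1) * S := by rw [← Finset.mul_sum]
    _ = S ^ p := by
        nth_rewrite 2 [← Real.rpow_one S]
        rw [← Real.rpow_add hpos]
        norm_num

lemma trace_pow_eq_sum_eigen (A : Matrix β β ℝ) (hA : A.IsHermitian) (k : ℕ) :
    Matrix.trace (A ^ k) = ∑ i, hA.eigenvalues i ^ k := by
  have hU : (star (hA.eigenvectorUnitary : Matrix β β ℝ)) * (hA.eigenvectorUnitary : Matrix β β ℝ)
      = 1 := Unitary.coe_star_mul_self _
  have hpow : A ^ k = (hA.eigenvectorUnitary : Matrix β β ℝ)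
      * (Matrix.diagonal (RCLike.ofReal ∘ hA.eigenvalues)) ^ k
      * (star (hA.eigenvectorUnitary : Matrix β β ℝ)) := by
    induction k with
    | zero =>
      simp only [pow_zero, Matrix.mul_one]
      exact (Unitary.coe_mul_star_self _).symm
    | succ k ih =>
      have hUU : (hA.eigenvectorUnitary : Matrix β β ℝ)
          * (star (hA.eigenvectorUnitary : Matrix β β ℝ)) = 1 := Unitary.coe_mul_star_self _
      have hDA : (star (hA.eigenvectorUnitary : Matrix β β ℝ)) * A
          = (Matrix.diagonal (RCLike.ofReal ∘ hA.eigenvalues))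
            * (star (hA.eigenvectorUnitary : Matrix β β ℝ)) := by
        have h := hA.conjStarAlgAut_star_eigenvectorUnitary
        rw [Unitary.conjStarAlgAut_star_apply] at h
        have h2 : ((star (hA.eigenvectorUnitary : Matrix β β ℝ)) * A
            * (hA.eigenvectorUnitary : Matrix β β ℝ))
            * (star (hA.eigenvectorUnitary : Matrix β β ℝ))
            = (star (hA.eigenvectorUnitary : Matrix β β ℝ)) * A := by
          rw [Matrix.mul_assoc ((star (hA.eigenvectorUnitary : Matrix β β ℝ)) * A), hUU,
            Matrix.mul_one]
        rw [← h2, h]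
      rw [pow_succ, pow_succ, ih, Matrix.mul_assoc, hDA]
      simp only [Matrix.mul_assoc]
  rw [hpow, Matrix.trace_mul_cycle, hU, Matrix.one_mul,
    Matrix.diagonal_pow, Matrix.trace_diagonal]
  simp [RCLike.ofReal]

lemma trace_pow_le_trace_pow_rpow (A : Matrix β β ℝ) (hA : A.IsHermitian) (n m : ℕ)
    (hn : n ≠ 0) (hnm : 2 * n ≤ m) :
    Matrix.trace (A ^ m) ≤ (Matrix.trace (A ^ (2 * n))) ^ ((m : ℝ) / (2 * n)) := by
  rw [trace_pow_eq_sum_eigen A hA, trace_pow_eq_sum_eigen A hA]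
  have h2n : (0:ℝ) < 2 * n := by positivity
  have hp1 : 1 ≤ (m : ℝ) / (2 * n) := by
    rw [le_div_iff₀ h2n]
    have : (2:ℝ) * n ≤ m := by exact_mod_cast hnm
    linarith
  calc ∑ i, hA.eigenvalues i ^ m ≤ ∑ i, (hA.eigenvalues i ^ (2 * n)) ^ ((m : ℝ) / (2 * n)) := by
        refine Finset.sum_le_sum (fun i _ => ?_)
        have habs : hA.eigenvalues i ^ m ≤ |hA.eigenvalues i| ^ m := by
          calc hA.eigenvalues i ^ m ≤ |hA.eigenvalues i ^ m| := le_abs_self _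
          _ = |hA.eigenvalues i| ^ m := abs_pow _ _
        refine habs.trans (le_of_eq ?_)
        have h1 : hA.eigenvalues i ^ (2 * n) = |hA.eigenvalues i| ^ (2 * n) :=
          ((even_two_mul n).pow_abs _).symm
        rw [h1, ← Real.rpow_natCast |hA.eigenvalues i| (2*n),
          ← Real.rpow_mul (abs_nonneg _), ← Real.rpow_natCast |hA.eigenvalues i| m]
        congr 1
        push_cast
        field_simp
    _ ≤ (∑ i, hA.eigenvalues i ^ (2 * n)) ^ ((m : ℝ) / (2 * n)) := by
        refine sum_rpow_le_rpow_sum' (fun i _ => ?_) hp1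
        exact (even_two_mul n).pow_nonneg _

/-- The homomorphism density `t(G, W)`. -/
noncomputable def homDensity {α β : Type} [Fintype α] [Fintype β]
    (G : SimpleGraph α) (W : SimpleGraph β) : ℝ :=
  (Nat.card (G →g W) : ℝ) / (Fintype.card β : ℝ) ^ (Fintype.card α)

open SimpleGraph in
lemma homDensity_cycle_eq (k : ℕ) (hk : 2 ≤ k) (W : SimpleGraph β) [DecidableRel W.Adj] :
    homDensity (cycleGraph k) W
      = Matrix.trace ((W.adjMatrix ℝ) ^ k) / (Fintype.card β : ℝ) ^ k := by
  obtain ⟨j, rfl⟩ := Nat.exists_eq_add_of_le' hk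
  rw [homDensity, Fintype.card_fin, hom_card j W, ← trace_pow_eq_cycSum]

open SimpleGraph in
lemma trace_nonneg_of_cycle (k : ℕ) (hk : 2 ≤ k) (W : SimpleGraph β) [DecidableRel W.Adj] :
    0 ≤ Matrix.trace ((W.adjMatrix ℝ) ^ k) := by
  obtain ⟨j, rfl⟩ := Nat.exists_eq_add_of_le' hk
  rw [show j + 2 = (j + 1) + 1 from rfl, trace_pow_eq_cycSum, ← hom_card j W]
  positivity

open SimpleGraph in
lemma part_one (m n : ℕ) (hn : 2 ≤ n) (hm : 2 * n < m) (β : Type) [Fintype β] [Nonempty β]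
    (W : SimpleGraph β) :
    homDensity (cycleGraph (2 * n)) W ≥
      homDensity (cycleGraph m) W ^ ((2 * (n : ℝ)) / (m : ℝ)) := by
  classical
  set A := W.adjMatrix ℝ with hA
  have hAH : A.IsHermitian := by
    ext i j
    simp [Matrix.conjTranspose_apply, hA, SimpleGraph.adjMatrix_apply, SimpleGraph.adj_comm]
  have hN : (0:ℝ) < (Fintype.card β : ℝ) := by
    exact_mod_cast Fintype.card_pos
  have h2n2 : 2 ≤ 2 * n := by omega
  have hm2 : 2 ≤ m := by omega
  have hn0 : n ≠ 0 := by omega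
  have hm0 : (m:ℝ) ≠ 0 := Nat.cast_ne_zero.mpr (by omega)
  have hn0' : ((2 * n : ℕ):ℝ) ≠ 0 := Nat.cast_ne_zero.mpr (by omega)
  rw [homDensity_cycle_eq (2 * n) h2n2 W, homDensity_cycle_eq m hm2 W]
  have hT2 : 0 ≤ Matrix.trace (A ^ (2 * n)) := trace_nonneg_of_cycle (2*n) h2n2 W
  have hTm : 0 ≤ Matrix.trace (A ^ m) := trace_nonneg_of_cycle m hm2 W
  have hkey : Matrix.trace (A ^ m) ≤ (Matrix.trace (A ^ (2 * n))) ^ ((m : ℝ) / (2 * n)) :=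
    trace_pow_le_trace_pow_rpow A hAH n m hn0 (le_of_lt hm)
  set T2 := Matrix.trace (A ^ (2 * n)) with hT2def
  set Tm := Matrix.trace (A ^ m) with hTmdef
  set N := (Fintype.card β : ℝ) with hNdef
  have hexp : (0:ℝ) ≤ 2 * (n:ℝ) / m := by positivity
  calc (Tm / N ^ m) ^ (2 * (n:ℝ) / m)
      ≤ (T2 ^ ((m:ℝ)/(2*n)) / N ^ m) ^ (2 * (n:ℝ) / m) := by
        refine Real.rpow_le_rpow (by positivity) ?_ hexp
        exact div_le_div_of_nonneg_right hkey (by positivity) |>.trans_eq rfl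
    _ = T2 / N ^ (2 * n) := by
        rw [Real.div_rpow (by positivity) (by positivity)]
        congr 1
        · rw [← Real.rpow_mul hT2,
            show (↑m / (2 * (n:ℝ))) * (2 * ↑n / ↑m) = (1:ℝ) by
              have hn2 : (2 * (n:ℝ)) ≠ 0 := by positivity
              field_simp]
          exact Real.rpow_one T2
        · rw [← Real.rpow_natCast N m, ← Real.rpow_mul (le_of_lt hN),
            ← Real.rpow_natCast N (2*n)]
          congr 1
          push_cast
          have hn2 : (2 * (n:ℝ)) ≠ 0 := by positivity
          field_simp

section CompleteGraph

variable {N : ℕ}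

noncomputable def Jmat (N : ℕ) : Matrix (Fin N) (Fin N) ℝ := Matrix.of (fun _ _ => 1)

lemma Jmat_mul_Jmat : Jmat N * Jmat N = (N:ℝ) • Jmat N := by
  ext i j
  simp [Jmat, Matrix.mul_apply]

lemma adjMatrix_top : (⊤ : SimpleGraph (Fin N)).adjMatrix ℝ = Jmat N - 1 := by
  ext i j
  by_cases h : i = j <;>
    simp [SimpleGraph.adjMatrix_apply, Jmat, Matrix.one_apply, h, Ne.symm]

lemma smul_pow_J (k : ℕ) :
    (N:ℝ) • (Jmat N - 1) ^ (k + 1)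
      = (((N:ℝ) - 1) ^ (k + 1) - (-1:ℝ) ^ (k + 1)) • Jmat N
        + ((-1:ℝ) ^ (k + 1) * N) • (1 : Matrix (Fin N) (Fin N) ℝ) := by
  induction k with
  | zero =>
    rw [pow_one]
    rw [smul_sub]
    module
  | succ k ih =>
    rw [pow_succ, ← smul_mul_assoc, ih, add_mul, smul_mul_assoc, smul_mul_assoc,
      mul_sub, mul_sub, Jmat_mul_Jmat, Matrix.mul_one, Matrix.one_mul, Matrix.mul_one,
      smul_sub, smul_sub, smul_smul]
    module

lemma trace_top_pow (hN : 0 < N) (k : ℕ) :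
    Matrix.trace (((⊤ : SimpleGraph (Fin N)).adjMatrix ℝ) ^ (k + 1))
      = ((N:ℝ) - 1) ^ (k + 1) + (-1:ℝ) ^ (k + 1) * ((N:ℝ) - 1) := by
  have hN0 : (N:ℝ) ≠ 0 := Nat.cast_ne_zero.mpr (by omega)
  have h := congrArg Matrix.trace (smul_pow_J (N := N) k)
  rw [Matrix.trace_smul, Matrix.trace_add, Matrix.trace_smul, Matrix.trace_smul,
    Matrix.trace_one] at h
  simp only [smul_eq_mul, Fintype.card_fin] at h
  have hJtr : Matrix.trace (Jmat N) = (N:ℝ) := by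
    simp [Jmat, Matrix.trace]
  rw [hJtr] at h
  rw [adjMatrix_top]
  have : (N:ℝ) * Matrix.trace ((Jmat N - 1) ^ (k + 1))
      = (N:ℝ) * (((N:ℝ) - 1) ^ (k + 1) + (-1:ℝ) ^ (k + 1) * ((N:ℝ) - 1)) := by
    rw [h]
    ring
  exact mul_left_cancel₀ hN0 this

open SimpleGraph in
lemma homDensity_top (k : ℕ) (hk : 2 ≤ k) (hN : 0 < N) :
    homDensity (cycleGraph k) (⊤ : SimpleGraph (Fin N))
      = (((N:ℝ) - 1) ^ k + (-1:ℝ) ^ k * ((N:ℝ) - 1)) / (N:ℝ) ^ k := by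
  rw [homDensity_cycle_eq k hk]
  obtain ⟨j, rfl⟩ : ∃ j, k = j + 1 := ⟨k - 1, by omega⟩
  rw [trace_top_pow hN, Fintype.card_fin]

end CompleteGraph

section Limits

open Filter Real

noncomputable def pfun (k N : ℕ) : ℝ :=
  (((N:ℝ) - 1) ^ k + (-1:ℝ) ^ k * ((N:ℝ) - 1)) / (N:ℝ) ^ k

lemma pfun_pos {k N : ℕ} (hk : 3 ≤ k) (hN : 3 ≤ N) : 0 < pfun k N := by
  have hx : (3:ℝ) ≤ (N:ℝ) := by exact_mod_cast hN
  have h1 : (2:ℝ) ≤ (N:ℝ) - 1 := by linarith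
  have h2 : ((N:ℝ) - 1) ^ 1 < ((N:ℝ) - 1) ^ k := by
    refine pow_lt_pow_right₀ (by linarith) (by omega)
  have h3 : (-1:ℝ) ^ k * ((N:ℝ) - 1) ≥ -(((N:ℝ) - 1)) := by
    rcases Nat.even_or_odd k with h | h
    · rw [h.neg_one_pow]; nlinarith
    · rw [h.neg_one_pow]; nlinarith
  have hden : (0:ℝ) < (N:ℝ) ^ k := by positivity
  refine div_pos ?_ hden
  rw [pow_one] at h2
  linarith

lemma pfun_lt_one {k N : ℕ} (hk : 3 ≤ k) (hN : 3 ≤ N) : pfun k N < 1 := by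
  obtain ⟨j, rfl⟩ := Nat.exists_eq_add_of_le' hk
  have hx : (3:ℝ) ≤ (N:ℝ) := by exact_mod_cast hN
  have h1 : (2:ℝ) ≤ (N:ℝ) - 1 := by linarith
  have hden : (0:ℝ) < (N:ℝ) ^ (j + 3) := by positivity
  rw [pfun, div_lt_one hden]
  have h2 : (-1:ℝ) ^ (j+3) * ((N:ℝ) - 1) ≤ ((N:ℝ) - 1) := by
    rcases Nat.even_or_odd (j+3) with h | h
    · rw [h.neg_one_pow]; nlinarith
    · rw [h.neg_one_pow]; nlinarith
  have h3 : ((N:ℝ) - 1) ^ 1 < ((N:ℝ) - 1) ^ (j + 2) :=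
    pow_lt_pow_right₀ (by linarith) (by omega)
  rw [pow_one] at h3
  have h4 : ((N:ℝ) - 1) ^ (j + 3) + ((N:ℝ) - 1) ^ (j + 2) = ((N:ℝ) - 1) ^ (j + 2) * (N:ℝ) := by
    ring
  have h5 : ((N:ℝ) - 1) ^ (j + 2) ≤ (N:ℝ) ^ (j + 2) :=
    pow_le_pow_left₀ (by linarith) (by linarith) _
  have h6 : ((N:ℝ) - 1) ^ (j + 2) * (N:ℝ) ≤ (N:ℝ) ^ (j + 2) * (N:ℝ) := by
    nlinarith
  have h7 : (N:ℝ) ^ (j + 2) * (N:ℝ) = (N:ℝ) ^ (j + 3) := by ring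
  linarith

lemma abs_log_one_add_le {x : ℝ} (h : |x| ≤ 1/2) : |Real.log (1+x)| ≤ 2 * |x| := by
  obtain ⟨hl, hu⟩ := abs_le.mp h
  have hpos : 0 < 1 + x := by linarith
  rw [abs_le]
  constructor
  · have h2 := Real.log_le_sub_one_of_pos (inv_pos.mpr hpos)
    rw [Real.log_inv] at h2
    have h3 : (1+x)⁻¹ - 1 = -x/(1+x) := by field_simp; ring
    have h4 : -x/(1+x) ≤ 2*|x| := by
      rw [div_le_iff₀ hpos]
      nlinarith [abs_nonneg x, neg_le_abs x, le_abs_self x]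
    rw [h3] at h2
    linarith
  · have h5 := Real.log_le_sub_one_of_pos hpos
    have h6 : x ≤ |x| := le_abs_self x
    nlinarith [abs_nonneg x]

lemma tendstoA : Tendsto (fun N : ℕ => (N:ℝ) * Real.log (((N:ℝ) - 1)/(N:ℝ)))
    atTop (nhds (-1)) := by
  have base := Real.tendsto_one_add_div_pow_exp (-1)
  have hlog := (Real.continuousAt_log (Real.exp_pos (-1)).ne').tendsto.comp base
  rw [Real.log_exp] at hlog
  refine hlog.congr' ?_
  filter_upwards [eventually_ge_atTop 1] with N hN
  have hN0 : (N:ℝ) ≠ 0 := Nat.cast_ne_zero.mpr (by omega)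
  have h1 : 1 + (-1:ℝ)/(N:ℝ) = ((N:ℝ) - 1)/(N:ℝ) := by
    field_simp
    ring
  rw [Function.comp_apply, h1, Real.log_pow]

lemma tendstoB (k : ℕ) : Tendsto
    (fun N : ℕ => (N:ℝ) * Real.log (1 + (-1:ℝ) ^ (k+3) / ((N:ℝ) - 1) ^ (k+2)))
    atTop (nhds 0) := by
  have hg : Tendsto (fun N : ℕ => 4 * ((N:ℝ) - 1)⁻¹) atTop (nhds 0) := by
    have h1 : Tendsto (fun N : ℕ => (N:ℝ) - 1) atTop atTop :=
      tendsto_atTop_add_const_right atTop (-1) tendsto_natCast_atTop_atTop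
    have := h1.inv_tendsto_atTop
    simpa using this.const_mul (4:ℝ)
  refine squeeze_zero_norm' ?_ hg
  filter_upwards [eventually_ge_atTop 3] with N hN
  have hx : (3:ℝ) ≤ (N:ℝ) := by exact_mod_cast hN
  have h1 : (2:ℝ) ≤ (N:ℝ) - 1 := by linarith
  set r := (-1:ℝ) ^ (k+3) / ((N:ℝ) - 1) ^ (k+2) with hr
  have hrabs : |r| = 1 / ((N:ℝ) - 1) ^ (k+2) := by
    rw [hr, abs_div, abs_pow, abs_pow, abs_neg, abs_one, one_pow, abs_of_nonneg (by linarith)]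
  have hple : ((N:ℝ) - 1) ^ 2 ≤ ((N:ℝ) - 1) ^ (k+2) :=
    pow_le_pow_right₀ (by linarith) (by omega)
  have hp2 : (4:ℝ) ≤ ((N:ℝ) - 1) ^ 2 := by nlinarith
  have hrle : |r| ≤ 1/4 := by
    rw [hrabs]
    rw [div_le_div_iff₀ (by positivity) (by norm_num)]
    linarith
  have hlog := abs_log_one_add_le (x := r) (by linarith)
  rw [Real.norm_eq_abs, abs_mul, abs_of_nonneg (by positivity : (0:ℝ) ≤ (N:ℝ))]
  have hNle : (N:ℝ) ≤ 2 * ((N:ℝ) - 1) := by linarith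
  have key : (N:ℝ) * |Real.log (1 + r)| ≤ (N:ℝ) * (2 * |r|) := by
    exact mul_le_mul_of_nonneg_left hlog (by positivity)
  have key2 : (N:ℝ) * (2 * |r|) ≤ 4 * ((N:ℝ) - 1)⁻¹ := by
    rw [hrabs]
    rw [show (N:ℝ) * (2 * (1 / ((N:ℝ) - 1) ^ (k+2))) = 2 * (N:ℝ) / ((N:ℝ) - 1) ^ (k+2) by ring,
      ← div_eq_mul_inv, div_le_div_iff₀ (by positivity) (by linarith)]
    have e1 : 2 * (N:ℝ) * ((N:ℝ) - 1) ≤ 4 * ((N:ℝ) - 1) ^ 2 := by nlinarith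
    have e2 : 4 * ((N:ℝ) - 1) ^ 2 ≤ 4 * ((N:ℝ) - 1) ^ (k + 2) := by linarith
    linarith
  linarith

end Limits

open Filter Real in
lemma tendstoC {k : ℕ} (hk : 3 ≤ k) :
    Tendsto (fun N : ℕ => (N:ℝ) * Real.log (pfun k N)) atTop (nhds (-(k:ℝ))) := by
  obtain ⟨j, rfl⟩ := Nat.exists_eq_add_of_le' hk
  have main := ((tendstoA.const_mul ((j:ℝ)+3)).add (tendstoB j))
  have hlim : ((j:ℝ)+3) * (-1) + 0 = -((j+3 : ℕ):ℝ) := by push_cast; ring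
  rw [hlim] at main
  refine main.congr' ?_
  filter_upwards [eventually_ge_atTop 3] with N hN
  have hx : (3:ℝ) ≤ (N:ℝ) := by exact_mod_cast hN
  have h1 : (2:ℝ) ≤ (N:ℝ) - 1 := by linarith
  have hq : (0:ℝ) < ((N:ℝ) - 1)/(N:ℝ) := by positivity
  have hrabs : |(-1:ℝ) ^ (j+3) / ((N:ℝ) - 1) ^ (j+2)| = 1 / ((N:ℝ) - 1) ^ (j+2) := by
    rw [abs_div, abs_pow, abs_pow, abs_neg, abs_one, one_pow, abs_of_nonneg (by linarith)]
  have hple : ((N:ℝ) - 1) ^ 1 ≤ ((N:ℝ) - 1) ^ (j+2) :=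
    pow_le_pow_right₀ (by linarith) (by omega)
  rw [pow_one] at hple
  have hrle : |(-1:ℝ) ^ (j+3) / ((N:ℝ) - 1) ^ (j+2)| ≤ 1/2 := by
    rw [hrabs, div_le_div_iff₀ (by positivity) (by norm_num)]
    linarith
  have hr1 : (0:ℝ) < 1 + (-1:ℝ) ^ (j+3) / ((N:ℝ) - 1) ^ (j+2) := by
    have := neg_le_of_abs_le hrle
    linarith
  have hsplit : pfun (j+3) N
      = (((N:ℝ) - 1)/(N:ℝ)) ^ (j+3) * (1 + (-1:ℝ) ^ (j+3) / ((N:ℝ) - 1) ^ (j+2)) := by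
    rw [pfun]
    have hN0 : (N:ℝ) ≠ 0 := by linarith
    have hN1 : ((N:ℝ) - 1) ≠ 0 := by linarith
    rw [div_pow, one_add_div (pow_ne_zero _ hN1), div_mul_div_comm, eq_div_iff (by positivity)]
    field_simp
    ring
  rw [hsplit, Real.log_mul (by positivity) (by linarith), Real.log_pow]
  push_cast
  ring

open Filter Real in
lemma tendsto_ratio {a b : ℕ} (ha : 3 ≤ a) (hb : 3 ≤ b) :
    Tendsto (fun N : ℕ => Real.log (pfun a N) / Real.log (pfun b N)) atTop
      (nhds ((a:ℝ)/(b:ℝ))) := by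
  have hb0 : -((b:ℝ)) ≠ 0 := by
    have : (0:ℝ) < (b:ℝ) := by exact_mod_cast (by omega : 0 < b)
    linarith
  have main := (tendstoC ha).div (tendstoC hb) hb0
  have : -((a:ℝ)) / -((b:ℝ)) = (a:ℝ)/(b:ℝ) := by ring
  rw [this] at main
  refine main.congr' ?_
  filter_upwards [eventually_ge_atTop 1] with N hN
  have hN0 : (N:ℝ) ≠ 0 := Nat.cast_ne_zero.mpr (by omega)
  simp only [Pi.div_apply]
  rw [mul_div_mul_left _ _ hN0]

open SimpleGraph Filter Real in
lemma part_two (m n : ℕ) (hn : 2 ≤ n) (hm : 2 * n < m) :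
    ∀ c : ℝ, c < (2 * (n : ℝ)) / (m : ℝ) →
      ∃ (N : ℕ) (W : SimpleGraph (Fin N)), 0 < N ∧
        0 < homDensity (cycleGraph m) W ∧
        homDensity (cycleGraph (2 * n)) W <
          homDensity (cycleGraph m) W ^ c := by
  intro c hc
  have h2n3 : 3 ≤ 2 * n := by omega
  have hm3 : 3 ≤ m := by omega
  have hratio := tendsto_ratio h2n3 hm3
  have hgt : ∀ᶠ N : ℕ in atTop, c < Real.log (pfun (2*n) N) / Real.log (pfun m N) := by
    refine hratio.eventually (lt_mem_nhds ?_)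
    calc c < 2 * (n:ℝ) / (m:ℝ) := hc
    _ = ((2*n : ℕ):ℝ)/(m:ℝ) := by push_cast; ring
  obtain ⟨N, hNprop, hN3⟩ : ∃ N : ℕ, (c < Real.log (pfun (2*n) N) / Real.log (pfun m N))
      ∧ 3 ≤ N := by
    obtain ⟨N0, hN0⟩ := (hgt.and (eventually_ge_atTop 3)).exists
    exact ⟨N0, hN0.1, hN0.2⟩
  have hNpos : 0 < N := by omega
  have hpeq : ∀ k : ℕ, 2 ≤ k →
      homDensity (cycleGraph k) (⊤ : SimpleGraph (Fin N)) = pfun k N := fun k hk =>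
    homDensity_top k hk hNpos
  have hpm := pfun_pos hm3 hN3
  have hpm1 := pfun_lt_one hm3 hN3
  have hp2 := pfun_pos h2n3 hN3
  have hLm : Real.log (pfun m N) < 0 := Real.log_neg hpm hpm1
  refine ⟨N, ⊤, hNpos, ?_, ?_⟩
  · rw [hpeq m (by omega)]
    exact hpm
  · rw [hpeq m (by omega), hpeq (2*n) (by omega)]
    have h1 : (Real.log (pfun (2*n) N) / Real.log (pfun m N)) * Real.log (pfun m N)
        < c * Real.log (pfun m N) := mul_lt_mul_of_neg_right hNprop hLm
    rw [div_mul_cancel₀ _ (ne_of_lt hLm)] at h1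
    have h2 : pfun m N ^ c = Real.exp (Real.log (pfun m N) * c) := Real.rpow_def_of_pos hpm c
    rw [h2, ← Real.exp_log hp2]
    rw [Real.exp_lt_exp, mul_comm (Real.log (pfun m N)) c]
    exact h1

theorem stmt_8 (m n : ℕ) (hn : 2 ≤ n) (hm : 2 * n < m) :
    (∀ (β : Type) [Fintype β] [Nonempty β] (W : SimpleGraph β),
      homDensity (SimpleGraph.cycleGraph (2 * n)) W ≥
        homDensity (SimpleGraph.cycleGraph m) W ^ ((2 * (n : ℝ)) / (m : ℝ))) ∧
    (∀ c : ℝ, c < (2 * (n : ℝ)) / (m : ℝ) →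
      ∃ (N : ℕ) (W : SimpleGraph (Fin N)), 0 < N ∧
        0 < homDensity (SimpleGraph.cycleGraph m) W ∧
        homDensity (SimpleGraph.cycleGraph (2 * n)) W <
          homDensity (SimpleGraph.cycleGraph m) W ^ c) := by
  constructor
  · intro β _ _ W
    exact part_one m n hn hm β W
  · exact part_two m n hn hm
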